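/- Assume d is bounded. Then d_F and d_Fm are metrics on F' if and only if θ ≤ 2, and both coincide with the Hausdorff distance d_H induced by d on ordinary finite nonempty subsets of X, i.e. for finite nonempty subsets S,T of X, identified with the elements {1e_x : x∈S} and {1e_x : x∈T} of F', one has d_F(S,T) = d_Fm(S,T) = d_H(S,T). -/

import Mathlib

/-- `ρ` is a metric: zero iff equal, symmetric, triangle inequality. -/
def IsMetric {α : Type*} (ρ : α → α → ℝ) : Prop :=
  (∀ x y, ρ x y = 0 ↔ x = y) ∧ (∀ x y, ρ x y = ρ y x) ∧
    ∀ x y z, ρ x z ≤ ρ x y + ρ y z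

def IsCauchyWith {α : Type*} (ρ : α → α → ℝ) (S : ℕ → α) : Prop :=
  ∀ ε : ℝ, 0 < ε → ∃ N : ℕ, ∀ m ≥ N, ∀ n ≥ N, ρ (S m) (S n) < ε

def TendsToWith {α : Type*} (ρ : α → α → ℝ) (S : ℕ → α) (l : α) : Prop :=
  ∀ ε : ℝ, 0 < ε → ∃ N : ℕ, ∀ n ≥ N, ρ (S n) l < ε

def IsCompleteWith {α : Type*} (ρ : α → α → ℝ) : Prop :=
  ∀ S : ℕ → α, IsCauchyWith ρ S → ∃ l, TendsToWith ρ S l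

/-- the topology generated by the open balls of `ρ` -/
def topOf {α : Type*} (ρ : α → α → ℝ) : TopologicalSpace α :=
  TopologicalSpace.generateFrom {s | ∃ (x : α) (ε : ℝ), s = {y | ρ x y < ε}}

/-- `sup d`, the supremum of all distances in `X` -/
noncomputable def supD (X : Type*) [MetricSpace X] : ℝ :=
  sSup {r : ℝ | ∃ x y : X, dist x y = r}

/-- The multiset distance `d_E`: enumerate `a` and `c` with multiplicity in all possible
orders; the shorter enumeration is matched against an initial part of the other, taking
the sum of the distances of matched pairs plus the notional part `M * |C(c) - C(a)|`;
`d_E` is the least such value. -/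
noncomputable def dE {X : Type*} [MetricSpace X] (M : ℝ) (a c : Multiset X) : ℝ :=
  sInf {r : ℝ | ∃ la lc : List X, (la : Multiset X) = a ∧ (lc : Multiset X) = c ∧
    r = (List.zipWith dist la lc).sum + M * |(c.card : ℝ) - (a.card : ℝ)|}

/-- `d_Em`, the mean version of `d_E` (equal to `0` on the pair of empty multisets). -/
noncomputable def dEm {X : Type*} [MetricSpace X] (M : ℝ) (a c : Multiset X) : ℝ :=
  dE M a c / (max a.card c.card : ℕ)

/-- The setoid on `X × ℕ` identifying all points of the form `(x, 0)`. -/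
def ARel (X : Type*) : Setoid (X × ℕ) where
  r p q := p = q ∨ (p.2 = 0 ∧ q.2 = 0)
  iseqv := by
    refine ⟨fun p => Or.inl rfl, ?_, ?_⟩
    · rintro p q (rfl | h)
      · exact Or.inl rfl
      · exact Or.inr ⟨h.2, h.1⟩
    · rintro p q r (rfl | h) (rfl | h') <;> tauto

/-- The space `A`: the quotient of `X × ℕ` identifying all `(x, 0)` to one point. -/
abbrev SpaceA (X : Type*) : Type _ := Quotient (ARel X)

/-- The class `r eₓ` of `(x, r)` in `A`. -/
def aMk {X : Type*} (x : X) (r : ℕ) : SpaceA X := Quotient.mk (ARel X) (x, r)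

/-- The distinguished point `e₀` of `A`. -/
noncomputable def e0A (X : Type*) [Nonempty X] : SpaceA X :=
  aMk (Classical.arbitrary X) 0

/-- The multiplicity of a point of `A`. -/
def cardA {X : Type*} : SpaceA X → ℕ :=
  Quotient.lift (fun p => p.2) (by rintro p q (rfl | ⟨h1, h2⟩) <;> simp_all)

/-- The distance `d_A(r eₓ, t e_z) = M|t - r| + min r t * d(x,z)` on `A`. -/
noncomputable def dA {X : Type*} [MetricSpace X] (M : ℝ) : SpaceA X → SpaceA X → ℝ :=
  Quotient.lift₂
    (fun p q => M * |(q.2 : ℝ) - (p.2 : ℝ)| + (min p.2 q.2 : ℕ) * dist p.1 q.1)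
    (by rintro p q p' q' (rfl | ⟨h1, h2⟩) (rfl | ⟨h3, h4⟩) <;> simp_all)

/-- The mean distance `d_Am = d_A / max r t` on `A` (with value `0` at `(e₀, e₀)`). -/
noncomputable def dAm {X : Type*} [MetricSpace X] (M : ℝ) (u v : SpaceA X) : ℝ :=
  dA M u v / (max (cardA u) (cardA v) : ℕ)
/-- The Hausdorff distance between two sets with respect to a distance function
`δ`: for finite nonempty `S`, `T` this is
`max (max_{s ∈ S} min_{t ∈ T} δ s t) (max_{t ∈ T} min_{s ∈ S} δ s t)`. -/
noncomputable def hausSet {α : Type*} (δ : α → α → ℝ) (S T : Set α) : ℝ :=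
  max (sSup ((fun s => sInf ((fun t => δ s t) '' T)) '' S))
    (sSup ((fun t => sInf ((fun s => δ s t) '' S)) '' T))

/-- `F'`, the collection of nonempty finite subsets of `A`. -/
abbrev FP (X : Type*) : Type _ := {S : Finset (SpaceA X) // S.Nonempty}

/-- `d_F`, the Hausdorff distance on `F'` induced by `d_A`. -/
noncomputable def dF {X : Type*} [MetricSpace X] (M : ℝ) (S T : FP X) : ℝ :=
  hausSet (dA M) (S.1 : Set (SpaceA X)) (T.1 : Set (SpaceA X))

/-- `d_Fm`, the Hausdorff distance on `F'` induced by `d_Am`. -/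
noncomputable def dFm {X : Type*} [MetricSpace X] (M : ℝ) (S T : FP X) : ℝ :=
  hausSet (dAm M) (S.1 : Set (SpaceA X)) (T.1 : Set (SpaceA X))

open Classical in
/-- The identification of a finite nonempty subset `S` of `X` with the element
`{1eₓ : x ∈ S}` of `F'`. -/
noncomputable def embF {X : Type*} (S : {S : Finset X // S.Nonempty}) : FP X :=
  ⟨S.1.image (fun x => aMk x 1), S.2.image _⟩

open Classical in
/-- The multiplicity contributed at `x : X` by a point of `A`. -/
noncomputable def wt {X : Type*} : SpaceA X → X → ℕ :=
  Quotient.lift (fun p x => if p.1 = x then p.2 else 0)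
    (by rintro p q (rfl | ⟨h1, h2⟩)
        · rfl
        · funext x; simp [h1, h2])

/-- `t_U : X → ℕ` for `U ∈ F'`: `t_U x = Σ_{r eₓ ∈ U} r`. -/
noncomputable def tU {X : Type*} (U : Finset (SpaceA X)) (x : X) : ℕ :=
  ∑ u ∈ U, wt u x

/-- The setoid on `F'` given by `U ~ V` iff `t_U = t_V`. -/
def GRel (X : Type*) : Setoid (FP X) where
  r U V := ∀ x : X, tU U.1 x = tU V.1 x
  iseqv := by
    refine ⟨fun U x => rfl, fun h x => (h x).symm, fun h h' x => (h x).trans (h' x)⟩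

/-- The space `G = F'/~`. -/
abbrev GSp (X : Type*) : Type _ := Quotient (GRel X)

/-- `t` descends to `G`. -/
noncomputable def tG {X : Type*} : GSp X → X → ℕ :=
  Quotient.lift (fun U => tU U.1) (by intro U V h; funext x; exact h x)

/-- The class `e₀ ∈ G` of `{e₀} ∈ F'`. -/
noncomputable def e0G (X : Type*) [Nonempty X] : GSp X :=
  Quotient.mk (GRel X) ⟨{e0A X}, Finset.singleton_nonempty _⟩

/-- `d_G`, the quotient pseudometric on `G` induced by `d_F`: the infimum of the
lengths `d_F(q₀,p₁) + d_F(q₁,p₂) + ⋯ + d_F(qₙ,pₙ₊₁)` of chains with `q₀ ∈ α`,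
`pₙ₊₁ ∈ β` and `pᵢ ~ qᵢ` for `1 ≤ i ≤ n`. -/
noncomputable def dG {X : Type*} [MetricSpace X] (M : ℝ) (α β : GSp X) : ℝ :=
  sInf {r : ℝ | ∃ (n : ℕ) (p q : ℕ → FP X),
    Quotient.mk (GRel X) (q 0) = α ∧ Quotient.mk (GRel X) (p (n + 1)) = β ∧
    (∀ i, 1 ≤ i → i ≤ n → (GRel X).r (p i) (q i)) ∧
    r = ∑ i ∈ Finset.range (n + 1), dF M (q i) (p (i + 1))}




lemma key_dA' (M a b c p q s : ℝ) (hM : 0 ≤ M) (ha : 0 ≤ a) (hb : 0 ≤ b) (hac : a ≤ c)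
    (hpq : s ≤ p + q) (hp : 0 ≤ p) (hq : 0 ≤ q) (hs : 0 ≤ s) (hs2 : s ≤ 2 * M) :
    M * |c - a| + min a c * s ≤
      M * |b - a| + min a b * p + (M * |c - b| + min b c * q) := by
  rcases le_total a b with h | h
  · rw [min_eq_left hac, min_eq_left h, abs_of_nonneg (by linarith : (0:ℝ) ≤ c - a),
      abs_of_nonneg (by linarith : (0:ℝ) ≤ b - a)]
    have h3 : a ≤ min b c := le_min h hac
    have h6 : c - b ≤ |c - b| := le_abs_self _
    linarith [mul_nonneg ha (by linarith : (0:ℝ) ≤ p + q - s),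
      mul_nonneg (by linarith : (0:ℝ) ≤ min b c - a) hq,
      mul_nonneg hM (by linarith : (0:ℝ) ≤ |c - b| - (c - b))]
  · rw [min_eq_left hac, min_eq_right h, min_eq_left (le_trans h hac),
      abs_of_nonneg (by linarith : (0:ℝ) ≤ c - a),
      abs_of_nonpos (by linarith : b - a ≤ (0:ℝ)),
      abs_of_nonneg (by linarith : (0:ℝ) ≤ c - b)]
    linarith [mul_nonneg (by linarith : (0:ℝ) ≤ a - b) (by linarith : (0:ℝ) ≤ 2 * M - s),
      mul_nonneg hb (by linarith : (0:ℝ) ≤ p + q - s)]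

lemma key_dA (M a b c p q s : ℝ) (hM : 0 ≤ M) (ha : 0 ≤ a) (hb : 0 ≤ b) (hc : 0 ≤ c)
    (hpq : s ≤ p + q) (hp : 0 ≤ p) (hq : 0 ≤ q) (hs : 0 ≤ s) (hs2 : s ≤ 2 * M) :
    M * |c - a| + min a c * s ≤
      M * |b - a| + min a b * p + (M * |c - b| + min b c * q) := by
  rcases le_total a c with h | h
  · exact key_dA' M a b c p q s hM ha hb h hpq hp hq hs hs2
  · have := key_dA' M c b a q p s hM hc hb h (by linarith) hq hp hs hs2
    rw [abs_sub_comm a c, min_comm c a, abs_sub_comm b c, min_comm c b,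
      abs_sub_comm a b, min_comm b a] at this
    linarith

lemma key_dAm' (M a b c p q s : ℝ) (hM : 0 ≤ M) (ha : 1 ≤ a) (hb : 1 ≤ b) (hc : 1 ≤ c)
    (hac : a ≤ c) (hpq : s ≤ p + q) (hp : 0 ≤ p) (hq : 0 ≤ q) (hs : 0 ≤ s)
    (hs2 : s ≤ 2 * M) :
    (M * |c - a| + min a c * s) / max a c ≤
      (M * |b - a| + min a b * p) / max a b + (M * |c - b| + min b c * q) / max b c := by
  have ha0 : (0:ℝ) < a := by linarith
  have hb0 : (0:ℝ) < b := by linarith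
  have hc0 : (0:ℝ) < c := by linarith
  rw [max_eq_right hac, min_eq_left hac, abs_of_nonneg (by linarith : (0:ℝ) ≤ c - a)]
  rcases le_total b a with h | h
  · -- b ≤ a ≤ c
    rw [max_eq_left h, min_eq_right h, max_eq_right (h.trans hac), min_eq_left (h.trans hac),
      abs_of_nonpos (by linarith : b - a ≤ (0:ℝ)),
      abs_of_nonneg (by linarith : (0:ℝ) ≤ c - b)]
    have key : (M * (c - a) + a * s) * a ≤
        (M * (-(b - a)) + b * p) * c + a * (M * (c - b) + b * q) := by
      nlinarith [mul_nonneg (mul_nonneg ha0.le (by linarith : (0:ℝ) ≤ a - b)) (by linarith : (0:ℝ) ≤ 2*M - s),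
        mul_nonneg (mul_nonneg ha0.le hb0.le) (by linarith : (0:ℝ) ≤ p + q - s),
        mul_nonneg (mul_nonneg hM (by linarith : (0:ℝ) ≤ a - b)) (by linarith : (0:ℝ) ≤ c - a),
        mul_nonneg (mul_nonneg hb0.le (by linarith : (0:ℝ) ≤ c - a)) hp]
    rw [div_add_div _ _ (ne_of_gt ha0) (ne_of_gt hc0), div_le_div_iff₀ hc0 (by positivity)]
    nlinarith [mul_le_mul_of_nonneg_right key hc0.le]
  · rcases le_total b c with h' | h'
    · -- a ≤ b ≤ c
      rw [max_eq_right h, min_eq_left h, max_eq_right h', min_eq_left h',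
        abs_of_nonneg (by linarith : (0:ℝ) ≤ b - a),
        abs_of_nonneg (by linarith : (0:ℝ) ≤ c - b)]
      have key : (M * (c - a) + a * s) * b ≤
          (M * (b - a) + a * p) * c + b * (M * (c - b) + b * q) := by
        nlinarith [mul_nonneg (mul_nonneg ha0.le hb0.le) (by linarith : (0:ℝ) ≤ p + q - s),
          mul_nonneg (mul_nonneg ha0.le (by linarith : (0:ℝ) ≤ c - b)) hp,
          mul_nonneg (mul_nonneg hb0.le (by linarith : (0:ℝ) ≤ b - a)) hq,
          mul_nonneg (mul_nonneg hM (by linarith : (0:ℝ) ≤ c - b)) (by linarith : (0:ℝ) ≤ b - a)]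
      rw [div_add_div _ _ (ne_of_gt hb0) (ne_of_gt hc0), div_le_div_iff₀ hc0 (by positivity)]
      nlinarith [mul_le_mul_of_nonneg_right key hc0.le]
    · -- a ≤ c ≤ b
      rw [max_eq_right h, min_eq_left h, max_eq_left h', min_eq_right h',
        abs_of_nonneg (by linarith : (0:ℝ) ≤ b - a),
        abs_of_nonpos (by linarith : c - b ≤ (0:ℝ))]
      have key : (M * (c - a) + a * s) * b ≤
          (M * (b - a) + a * p) * c + (M * (-(c - b)) + c * q) * c := by
        nlinarith [mul_nonneg (mul_nonneg ha0.le (by linarith : (0:ℝ) ≤ b - c)) (by linarith : (0:ℝ) ≤ 2*M - s),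
          mul_nonneg (mul_nonneg ha0.le hc0.le) (by linarith : (0:ℝ) ≤ p + q - s),
          mul_nonneg (mul_nonneg hc0.le (by linarith : (0:ℝ) ≤ c - a)) hq,
          mul_nonneg (mul_nonneg hM (by linarith : (0:ℝ) ≤ b - c)) (by linarith : (0:ℝ) ≤ c - a)]
      rw [div_add_div _ _ (ne_of_gt hb0) (ne_of_gt hb0), div_le_div_iff₀ hc0 (by positivity)]
      nlinarith [mul_le_mul_of_nonneg_right key (by positivity : (0:ℝ) ≤ b)]

lemma key_dAm (M a b c p q s : ℝ) (hM : 0 ≤ M) (ha : 1 ≤ a) (hb : 1 ≤ b) (hc : 1 ≤ c)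
    (hpq : s ≤ p + q) (hp : 0 ≤ p) (hq : 0 ≤ q) (hs : 0 ≤ s) (hs2 : s ≤ 2 * M) :
    (M * |c - a| + min a c * s) / max a c ≤
      (M * |b - a| + min a b * p) / max a b + (M * |c - b| + min b c * q) / max b c := by
  rcases le_total a c with h | h
  · exact key_dAm' M a b c p q s hM ha hb hc h hpq hp hq hs hs2
  · have := key_dAm' M c b a q p s hM hc hb ha h (by linarith) hq hp hs hs2
    rw [abs_sub_comm a c, min_comm c a, max_comm c a, abs_sub_comm b c, min_comm c b,
      max_comm c b, abs_sub_comm a b, min_comm b a, max_comm b a] at this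
    linarith

section DA
variable {X : Type*} [MetricSpace X] (M : ℝ)

lemma dA_mk (x z : X) (r t : ℕ) :
    dA M (aMk x r) (aMk z t) = M * |(t:ℝ) - (r:ℝ)| + ((min r t : ℕ) : ℝ) * dist x z := rfl

lemma cardA_mk (x : X) (r : ℕ) : cardA (aMk x r) = r := rfl

lemma aMk_eq_iff {x z : X} {r t : ℕ} : aMk x r = aMk z t ↔ (x, r) = (z, t) ∨ (r = 0 ∧ t = 0) := by
  constructor
  · intro h
    exact Quotient.exact h
  · intro h
    exact Quotient.sound h

lemma dA_nonneg (hM : 0 ≤ M) (u v : SpaceA X) : 0 ≤ dA M u v := by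
  refine Quotient.inductionOn₂ u v ?_
  rintro ⟨x, r⟩ ⟨z, t⟩
  show (0:ℝ) ≤ M * |(t:ℝ) - (r:ℝ)| + ((min r t : ℕ) : ℝ) * dist x z
  positivity

lemma dA_symm (u v : SpaceA X) : dA M u v = dA M v u := by
  refine Quotient.inductionOn₂ u v ?_
  rintro ⟨x, r⟩ ⟨z, t⟩
  show M * |(t:ℝ) - (r:ℝ)| + ((min r t : ℕ) : ℝ) * dist x z
    = M * |(r:ℝ) - (t:ℝ)| + ((min t r : ℕ) : ℝ) * dist z x
  rw [abs_sub_comm, min_comm, dist_comm]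

lemma dA_eq_zero (hM : 0 < M) (u v : SpaceA X) : dA M u v = 0 ↔ u = v := by
  refine Quotient.inductionOn₂ u v ?_
  rintro ⟨x, r⟩ ⟨z, t⟩
  show M * |(t:ℝ) - (r:ℝ)| + ((min r t : ℕ) : ℝ) * dist x z = 0 ↔ _
  constructor
  · intro h
    have h1 : (0:ℝ) ≤ M * |(t:ℝ) - (r:ℝ)| := by positivity
    have h2 : (0:ℝ) ≤ ((min r t : ℕ) : ℝ) * dist x z := by positivity
    have h3 : M * |(t:ℝ) - (r:ℝ)| = 0 := by linarith
    have h4 : ((min r t : ℕ) : ℝ) * dist x z = 0 := by linarith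
    have hrt : r = t := by
      have := (mul_eq_zero.1 h3).resolve_left (ne_of_gt hM)
      have : (t:ℝ) = r := by
        have := abs_eq_zero.1 this; linarith
      exact_mod_cast this.symm
    subst hrt
    rcases mul_eq_zero.1 h4 with h5 | h5
    · have : min r r = 0 := by exact_mod_cast h5
      have hr : r = 0 := by simpa using this
      subst hr
      exact Quotient.sound (Or.inr ⟨rfl, rfl⟩)
    · have : x = z := by
        have := dist_eq_zero.1 h5; exact this
      subst this
      rfl
  · intro h
    rcases Quotient.exact h with h' | h'
    · obtain ⟨h1, h2⟩ := Prod.ext_iff.1 h'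
      simp only at h1 h2
      subst h1; subst h2
      simp
    · obtain ⟨h1, h2⟩ := h'
      simp only at h1 h2
      subst h1; subst h2
      simp

lemma dA_triangle (hM : 0 < M) (h2 : ∀ x y : X, dist x y ≤ 2 * M) (u v w : SpaceA X) :
    dA M u w ≤ dA M u v + dA M v w := by
  refine Quotient.inductionOn₃ u v w ?_
  rintro ⟨x, a⟩ ⟨y, b⟩ ⟨z, c⟩
  show M * |(c:ℝ) - (a:ℝ)| + ((min a c : ℕ) : ℝ) * dist x z
    ≤ M * |(b:ℝ) - (a:ℝ)| + ((min a b : ℕ) : ℝ) * dist x y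
      + (M * |(c:ℝ) - (b:ℝ)| + ((min b c : ℕ) : ℝ) * dist y z)
  push_cast
  exact key_dA M a b c (dist x y) (dist y z) (dist x z) hM.le (by positivity) (by positivity)
    (by positivity) (dist_triangle x y z) dist_nonneg dist_nonneg dist_nonneg (h2 x z)

end DA

lemma key_dAm_full (M a b c p q s : ℝ) (hM : 0 < M) (ha : a = 0 ∨ 1 ≤ a) (hb : b = 0 ∨ 1 ≤ b)
    (hc : c = 0 ∨ 1 ≤ c) (hpq : s ≤ p + q) (hp : 0 ≤ p) (hq : 0 ≤ q) (hs : 0 ≤ s)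
    (hs2 : s ≤ 2 * M) :
    (M * |c - a| + min a c * s) / max a c ≤
      (M * |b - a| + min a b * p) / max a b + (M * |c - b| + min b c * q) / max b c := by
  rcases ha with rfl | ha <;> rcases hb with rfl | hb <;> rcases hc with rfl | hc
  · simp
  · -- a = 0, b = 0, 1 ≤ c
    have h1 : (0:ℝ) ≤ c := by linarith
    simp [abs_of_nonneg h1, min_eq_left h1, max_eq_right h1]
  · -- a = 0, 1 ≤ b, c = 0
    have h1 : (0:ℝ) ≤ b := by linarith
    have h2 : (0:ℝ) < b := by linarith
    simp [abs_of_nonneg h1, min_eq_left h1, max_eq_right h1, abs_of_nonpos (by linarith : -b ≤ (0:ℝ))]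
    positivity
  · -- a = 0, 1 ≤ b, 1 ≤ c
    have h1 : (0:ℝ) ≤ b := by linarith
    have h2 : (0:ℝ) ≤ c := by linarith
    have hb0 : (0:ℝ) < b := by linarith
    have hc0 : (0:ℝ) < c := by linarith
    rw [sub_zero, sub_zero, abs_of_nonneg h2, abs_of_nonneg h1, min_eq_left h2,
      min_eq_left h1, max_eq_right h2, max_eq_right h1]
    have e1 : (M * c + 0 * s) / c = M := by field_simp; ring
    have e2 : (M * b + 0 * p) / b = M := by field_simp; ring
    rw [e1, e2]
    have : 0 ≤ (M * |c - b| + min b c * q) / max b c := by positivity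
    linarith
  · -- 1 ≤ a, b = 0, c = 0
    have h1 : (0:ℝ) ≤ a := by linarith
    have ha0 : (0:ℝ) < a := by linarith
    rw [zero_sub, zero_sub, abs_neg, abs_neg, abs_of_nonneg h1, min_eq_right h1,
      max_eq_left h1]
    simp
  · -- 1 ≤ a, b = 0, 1 ≤ c
    have ha0 : (0:ℝ) < a := by linarith
    have hc0 : (0:ℝ) < c := by linarith
    rw [zero_sub, abs_neg, abs_of_nonneg ha0.le, sub_zero, abs_of_nonneg hc0.le,
      min_eq_right ha0.le, min_eq_left hc0.le, max_eq_left ha0.le, max_eq_right hc0.le]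
    have e1 : (M * a + 0 * p) / a = M := by field_simp; ring
    have e2 : (M * c + 0 * q) / c = M := by field_simp; ring
    rw [e1, e2]
    rw [div_le_iff₀ (by positivity : (0:ℝ) < max a c)]
    rcases le_total a c with h | h
    · rw [abs_of_nonneg (by linarith : (0:ℝ) ≤ c - a), min_eq_left h, max_eq_right h]
      nlinarith [mul_nonneg ha0.le (by linarith : (0:ℝ) ≤ 2 * M - s)]
    · rw [abs_of_nonpos (by linarith : c - a ≤ (0:ℝ)), min_eq_right h, max_eq_left h]
      nlinarith [mul_nonneg hc0.le (by linarith : (0:ℝ) ≤ 2 * M - s)]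
  · -- 1 ≤ a, 1 ≤ b, c = 0
    have ha0 : (0:ℝ) < a := by linarith
    have hb0 : (0:ℝ) < b := by linarith
    rw [zero_sub, abs_neg, abs_of_nonneg ha0.le, zero_sub, abs_neg, abs_of_nonneg hb0.le,
      min_eq_right ha0.le, min_eq_right hb0.le, max_eq_left ha0.le, max_eq_left hb0.le]
    have e1 : (M * a + 0 * s) / a = M := by field_simp; ring
    have e2 : (M * b + 0 * q) / b = M := by field_simp; ring
    rw [e1, e2]
    have : 0 ≤ (M * |b - a| + min a b * p) / max a b := by positivity
    linarith
  · exact key_dAm M a b c p q s hM.le ha hb hc hpq hp hq hs hs2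

section DAm
variable {X : Type*} [MetricSpace X] (M : ℝ)

lemma dAm_nonneg (hM : 0 ≤ M) (u v : SpaceA X) : 0 ≤ dAm M u v :=
  div_nonneg (dA_nonneg M hM u v) (by positivity)

lemma dAm_symm (u v : SpaceA X) : dAm M u v = dAm M v u := by
  rw [dAm, dAm, dA_symm, max_comm]

lemma dAm_eq_zero (hM : 0 < M) (u v : SpaceA X) : dAm M u v = 0 ↔ u = v := by
  constructor
  · intro h
    rcases div_eq_zero_iff.1 h with h' | h'
    · exact (dA_eq_zero M hM u v).1 h'
    · have hmax : max (cardA u) (cardA v) = 0 := by exact_mod_cast h'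
      have hu : cardA u = 0 := le_antisymm (le_trans (le_max_left _ _) hmax.le) (Nat.zero_le _)
      have hv : cardA v = 0 := le_antisymm (le_trans (le_max_right _ _) hmax.le) (Nat.zero_le _)
      revert hu hv
      refine Quotient.inductionOn₂ u v ?_
      rintro ⟨x, r⟩ ⟨z, t⟩ hu hv
      exact Quotient.sound (Or.inr ⟨hu, hv⟩)
  · rintro rfl
    rw [dAm, (dA_eq_zero M hM u u).2 rfl, zero_div]

lemma dAm_triangle (hM : 0 < M) (h2 : ∀ x y : X, dist x y ≤ 2 * M) (u v w : SpaceA X) :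
    dAm M u w ≤ dAm M u v + dAm M v w := by
  refine Quotient.inductionOn₃ u v w ?_
  rintro ⟨x, a⟩ ⟨y, b⟩ ⟨z, c⟩
  show (M * |(c:ℝ) - (a:ℝ)| + ((min a c : ℕ) : ℝ) * dist x z) / ((max a c : ℕ) : ℝ)
    ≤ (M * |(b:ℝ) - (a:ℝ)| + ((min a b : ℕ) : ℝ) * dist x y) / ((max a b : ℕ) : ℝ)
      + (M * |(c:ℝ) - (b:ℝ)| + ((min b c : ℕ) : ℝ) * dist y z) / ((max b c : ℕ) : ℝ)
  push_cast
  refine key_dAm_full M a b c (dist x y) (dist y z) (dist x z) hM ?_ ?_ ?_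
    (dist_triangle x y z) dist_nonneg dist_nonneg dist_nonneg (h2 x z)
  · rcases Nat.eq_zero_or_pos a with h | h
    · exact Or.inl (by exact_mod_cast h)
    · exact Or.inr (by exact_mod_cast h)
  · rcases Nat.eq_zero_or_pos b with h | h
    · exact Or.inl (by exact_mod_cast h)
    · exact Or.inr (by exact_mod_cast h)
  · rcases Nat.eq_zero_or_pos c with h | h
    · exact Or.inl (by exact_mod_cast h)
    · exact Or.inr (by exact_mod_cast h)

end DAm

section Haus
variable {α : Type*}

lemma finInf_le (f : α → ℝ) {S : Finset α} {a : α} (ha : a ∈ S) :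
    sInf (f '' (S : Set α)) ≤ f a :=
  csInf_le (S.finite_toSet.image f).bddBelow ⟨a, ha, rfl⟩

lemma le_finInf (f : α → ℝ) {S : Finset α} (hS : S.Nonempty) {r : ℝ}
    (h : ∀ a ∈ S, r ≤ f a) : r ≤ sInf (f '' (S : Set α)) :=
  le_csInf ((Finset.coe_nonempty.2 hS).image f) (by rintro _ ⟨a, ha, rfl⟩; exact h a ha)

lemma finInf_attained (f : α → ℝ) {S : Finset α} (hS : S.Nonempty) :
    ∃ a ∈ S, sInf (f '' (S : Set α)) = f a := by
  obtain ⟨y, hy⟩ := Set.Nonempty.csInf_mem ((Finset.coe_nonempty.2 hS).image f)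
    (S.finite_toSet.image f)
  exact ⟨y, hy.1, hy.2.symm⟩

lemma le_finSup (f : α → ℝ) {S : Finset α} {a : α} (ha : a ∈ S) :
    f a ≤ sSup (f '' (S : Set α)) :=
  le_csSup (S.finite_toSet.image f).bddAbove ⟨a, ha, rfl⟩

lemma finSup_le (f : α → ℝ) {S : Finset α} (hS : S.Nonempty) {r : ℝ}
    (h : ∀ a ∈ S, f a ≤ r) : sSup (f '' (S : Set α)) ≤ r :=
  csSup_le ((Finset.coe_nonempty.2 hS).image f) (by rintro _ ⟨a, ha, rfl⟩; exact h a ha)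

variable (δ : α → α → ℝ)

lemma hausF_le {S T : Finset α} (hS : S.Nonempty) (hT : T.Nonempty) {r : ℝ}
    (h1 : ∀ s ∈ S, sInf ((fun t => δ s t) '' (T : Set α)) ≤ r)
    (h2 : ∀ t ∈ T, sInf ((fun s => δ s t) '' (S : Set α)) ≤ r) :
    hausSet δ (S : Set α) (T : Set α) ≤ r :=
  max_le (finSup_le _ hS h1) (finSup_le _ hT h2)

lemma le_hausF₁ {S T : Finset α} {s : α} (hs : s ∈ S) :
    sInf ((fun t => δ s t) '' (T : Set α)) ≤ hausSet δ (S : Set α) (T : Set α) :=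
  le_trans (le_finSup (fun s => sInf ((fun t => δ s t) '' (T : Set α))) hs) (le_max_left _ _)

lemma le_hausF₂ {S T : Finset α} {t : α} (ht : t ∈ T) :
    sInf ((fun s => δ s t) '' (S : Set α)) ≤ hausSet δ (S : Set α) (T : Set α) :=
  le_trans (le_finSup (fun t => sInf ((fun s => δ s t) '' (S : Set α))) ht) (le_max_right _ _)

lemma haus_metric (h : IsMetric δ) :
    IsMetric (fun S T : {S : Finset α // S.Nonempty} =>
      hausSet δ (S.1 : Set α) (T.1 : Set α)) := by
  obtain ⟨hzero, hsymm, htri⟩ := h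
  have hself : ∀ x, δ x x = 0 := fun x => (hzero x x).2 rfl
  have hnn : ∀ x y, 0 ≤ δ x y := by
    intro x y
    have := htri x y x
    rw [hself x, hsymm y x] at this
    linarith
  have hinf_nn : ∀ (s : α) (T : Finset α) (f : α → ℝ), (∀ a, 0 ≤ f a) → T.Nonempty →
      0 ≤ sInf (f '' (T : Set α)) := fun s T f hf hT => le_finInf f hT (fun a _ => hf a)
  refine ⟨?_, ?_, ?_⟩
  · intro S T
    constructor
    · intro h0
      apply Subtype.ext
      apply Finset.Subset.antisymm
      · intro s hs
        have h1 : sInf ((fun t => δ s t) '' (T.1 : Set α)) ≤ 0 := h0 ▸ le_hausF₁ δ hs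
        have h2 : 0 ≤ sInf ((fun t => δ s t) '' (T.1 : Set α)) :=
          hinf_nn s T.1 _ (fun a => hnn s a) T.2
        obtain ⟨t, ht, het⟩ := finInf_attained (fun t => δ s t) T.2
        have : δ s t = 0 := by rw [← het]; linarith
        have : s = t := (hzero s t).1 this
        rwa [this]
      · intro t ht
        have h1 : sInf ((fun s => δ s t) '' (S.1 : Set α)) ≤ 0 := h0 ▸ le_hausF₂ δ ht
        have h2 : 0 ≤ sInf ((fun s => δ s t) '' (S.1 : Set α)) :=
          hinf_nn t S.1 _ (fun a => hnn a t) S.2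
        obtain ⟨s, hs, hes⟩ := finInf_attained (fun s => δ s t) S.2
        have : δ s t = 0 := by rw [← hes]; linarith
        have : s = t := (hzero s t).1 this
        rw [← this]; exact hs
    · rintro rfl
      refine le_antisymm (hausF_le δ S.2 S.2 ?_ ?_) ?_
      · intro s hs
        exact le_trans (finInf_le (fun t => δ s t) hs) (le_of_eq (hself s))
      · intro t ht
        exact le_trans (finInf_le (fun s => δ s t) ht) (le_of_eq (hself t))
      · obtain ⟨s, hs⟩ := S.2
        exact le_trans (hinf_nn s S.1 _ (fun a => hnn s a) S.2) (le_hausF₁ δ hs)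
  · intro S T
    have hfun : ∀ x : α, (fun y => δ x y) = (fun y => δ y x) :=
      fun x => funext fun y => hsymm x y
    show max _ _ = max _ _
    rw [max_comm]
    congr 1
    · apply congrArg
      apply Set.image_congr
      intro s _
      rw [hfun s]
    · apply congrArg
      apply Set.image_congr
      intro t _
      rw [hfun t]
  · intro S T U
    refine hausF_le δ S.2 U.2 ?_ ?_
    · intro s hs
      obtain ⟨t, ht, het⟩ := finInf_attained (fun t => δ s t) T.2
      obtain ⟨u, hu, heu⟩ := finInf_attained (fun u => δ t u) U.2
      calc sInf ((fun u => δ s u) '' (U.1 : Set α)) ≤ δ s u := finInf_le _ hu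
        _ ≤ δ s t + δ t u := htri s t u
        _ ≤ hausSet δ (S.1 : Set α) (T.1 : Set α) + hausSet δ (T.1 : Set α) (U.1 : Set α) := by
            have e1 : δ s t = sInf ((fun t => δ s t) '' (T.1 : Set α)) := het.symm
            have e2 : δ t u = sInf ((fun u => δ t u) '' (U.1 : Set α)) := heu.symm
            rw [e1, e2]
            exact add_le_add (le_hausF₁ δ hs) (le_hausF₁ δ ht)
    · intro u hu
      obtain ⟨t, ht, het⟩ := finInf_attained (fun t => δ t u) T.2
      obtain ⟨s, hs, hes⟩ := finInf_attained (fun s => δ s t) S.2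
      calc sInf ((fun s => δ s u) '' (S.1 : Set α)) ≤ δ s u := finInf_le _ hs
        _ ≤ δ s t + δ t u := htri s t u
        _ ≤ hausSet δ (S.1 : Set α) (T.1 : Set α) + hausSet δ (T.1 : Set α) (U.1 : Set α) := by
            rw [← hes, ← het]
            exact add_le_add (le_hausF₂ δ ht) (le_hausF₂ δ hu)

lemma haus_singleton (a b : α) : hausSet δ {a} {b} = δ a b := by
  simp [hausSet, Set.image_singleton]

end Haus

lemma haus_image {α β : Type*} (δ : β → β → ℝ) (d : α → α → ℝ) (f : α → β)
    (h : ∀ x y, δ (f x) (f y) = d x y) (S T : Set α) :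
    hausSet δ (f '' S) (f '' T) = hausSet d S T := by
  simp only [hausSet, Set.image_image, h]

/-- For bounded `d`: `d_F` and `d_Fm` are metrics on `F'` iff `(sup d)/M ≤ 2`, and
both coincide with the Hausdorff distance induced by `d` on ordinary finite nonempty
subsets of `X` (identified with elements of `F'` via `S ↦ {1eₓ : x ∈ S}`). -/
theorem stmt_15 {X : Type*} [MetricSpace X] [Nontrivial X] (M : ℝ) (hM : 0 < M)
    (hbdd : ∃ B : ℝ, ∀ x y : X, dist x y ≤ B) :
    ((IsMetric (dF (X := X) M) ↔ supD X / M ≤ 2) ∧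
      (IsMetric (dFm (X := X) M) ↔ supD X / M ≤ 2)) ∧
    (∀ S T : {S : Finset X // S.Nonempty},
      dF M (embF S) (embF T) = hausSet dist (S.1 : Set X) (T.1 : Set X) ∧
      dFm M (embF S) (embF T) = hausSet dist (S.1 : Set X) (T.1 : Set X)) := by
  obtain ⟨B, hB⟩ := hbdd
  have hNe : Nonempty X := inferInstance
  have hbddA : BddAbove {r : ℝ | ∃ x y : X, dist x y = r} :=
    ⟨B, by rintro r ⟨x, y, rfl⟩; exact hB x y⟩
  have hmem : ∀ x y : X, dist x y ≤ supD X := fun x y => le_csSup hbddA ⟨x, y, rfl⟩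
  have hθ : supD X / M ≤ 2 ↔ ∀ x y : X, dist x y ≤ 2 * M := by
    constructor
    · intro h x y
      have h' : supD X ≤ 2 * M := by rw [div_le_iff₀ hM] at h; linarith
      linarith [hmem x y]
    · intro h
      rw [div_le_iff₀ hM]
      have : supD X ≤ 2 * M :=
        csSup_le ⟨dist (Classical.arbitrary X) (Classical.arbitrary X),
            Classical.arbitrary X, Classical.arbitrary X, rfl⟩
          (by rintro r ⟨x, y, rfl⟩; exact h x y)
      linarith
  have sing : ∀ u : SpaceA X, ({u} : Finset (SpaceA X)).Nonempty :=
    fun u => Finset.singleton_nonempty u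
  have dF_sing : ∀ u v : SpaceA X, dF M ⟨{u}, sing u⟩ ⟨{v}, sing v⟩ = dA M u v := by
    intro u v
    show hausSet (dA M) (({u} : Finset (SpaceA X)) : Set (SpaceA X))
      (({v} : Finset (SpaceA X)) : Set (SpaceA X)) = _
    rw [Finset.coe_singleton, Finset.coe_singleton, haus_singleton]
  have dFm_sing : ∀ u v : SpaceA X, dFm M ⟨{u}, sing u⟩ ⟨{v}, sing v⟩ = dAm M u v := by
    intro u v
    show hausSet (dAm M) (({u} : Finset (SpaceA X)) : Set (SpaceA X))
      (({v} : Finset (SpaceA X)) : Set (SpaceA X)) = _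
    rw [Finset.coe_singleton, Finset.coe_singleton, haus_singleton]
  have dAuv : ∀ x y : X, dA M (aMk x 1) (aMk y 1) = dist x y := by
    intro x y; rw [dA_mk]; norm_num
  have dAu0 : ∀ x : X, dA M (aMk x 1) (e0A X) = M := by
    intro x
    show dA M (aMk x 1) (aMk (Classical.arbitrary X) 0) = M
    rw [dA_mk]; norm_num
  have dA0v : ∀ y : X, dA M (e0A X) (aMk y 1) = M := by
    intro y
    show dA M (aMk (Classical.arbitrary X) 0) (aMk y 1) = M
    rw [dA_mk]; norm_num
  have dAmuv : ∀ x y : X, dAm M (aMk x 1) (aMk y 1) = dist x y := by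
    intro x y
    rw [dAm, dAuv]
    norm_num [cardA_mk]
  have dAmu0 : ∀ x : X, dAm M (aMk x 1) (e0A X) = M := by
    intro x
    rw [dAm, dAu0]
    norm_num [cardA_mk, e0A]
  have dAm0v : ∀ y : X, dAm M (e0A X) (aMk y 1) = M := by
    intro y
    rw [dAm, dA0v]
    norm_num [cardA_mk, e0A]
  refine ⟨⟨⟨?_, ?_⟩, ⟨?_, ?_⟩⟩, ?_⟩
  · -- IsMetric dF → θ ≤ 2
    intro hmet
    refine hθ.2 (fun x y => ?_)
    have tri := hmet.2.2 ⟨{aMk x 1}, sing _⟩ ⟨{e0A X}, sing _⟩ ⟨{aMk y 1}, sing _⟩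
    rw [dF_sing, dF_sing, dF_sing, dAuv, dAu0, dA0v] at tri
    linarith
  · -- θ ≤ 2 → IsMetric dF
    intro h
    exact haus_metric (dA M) ⟨fun u v => dA_eq_zero M hM u v, dA_symm M,
      dA_triangle M hM (hθ.1 h)⟩
  · -- IsMetric dFm → θ ≤ 2
    intro hmet
    refine hθ.2 (fun x y => ?_)
    have tri := hmet.2.2 ⟨{aMk x 1}, sing _⟩ ⟨{e0A X}, sing _⟩ ⟨{aMk y 1}, sing _⟩
    rw [dFm_sing, dFm_sing, dFm_sing, dAmuv, dAmu0, dAm0v] at tri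
    linarith
  · -- θ ≤ 2 → IsMetric dFm
    intro h
    exact haus_metric (dAm M) ⟨fun u v => dAm_eq_zero M hM u v, dAm_symm M,
      dAm_triangle M hM (hθ.1 h)⟩
  · -- coincidence with the Hausdorff distance on X
    intro S T
    constructor
    · have e : dF M (embF S) (embF T)
          = hausSet (dA M) ((fun x => aMk x 1) '' (S.1 : Set X)) ((fun x => aMk x 1) '' (T.1 : Set X)) := by
        simp only [dF, embF, Finset.coe_image]
      rw [e, haus_image (dA M) dist _ dAuv]
    · have e : dFm M (embF S) (embF T)
          = hausSet (dAm M) ((fun x => aMk x 1) '' (S.1 : Set X)) ((fun x => aMk x 1) '' (T.1 : Set X)) := by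
        simp only [dFm, embF, Finset.coe_image]
      rw [e, haus_image (dAm M) dist _ dAmuv]
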